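/- Combined sharpness statement: Let n ≥ 1, let α be any real number, and let q satisfy q > 1 and q > 1 + α/n. Then there exist measurable, locally bounded, symmetric coefficients a_{ij} on ℝ × ℝⁿ with 0 ≤ Σ_{i,j} a_{ij}(t,x)ξ_iξ_j for all ξ ∈ ℝⁿ, satisfying condition (8) with exponent α and some constant c > 0, and a C^∞ function u on ℝ × ℝⁿ which is nonnegative, not identically zero, and satisfies u_t(t,x) ≥ Σ_{i,j} ∂_{x_i}(a_{ij} ∂_{x_j}u)(t,x) + |u(t,x)|^{q−1}u(t,x) at every point (t,x) ∈ ℝ × ℝⁿ. Hence the restriction q ≤ 1 + α/n in Theorems 1–3 cannot be relaxed (for q > 1). -/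

import Mathlib

open MeasureTheory

noncomputable section

/-- The whole space `ℝ × ℝⁿ` (time × space). -/
abbrev Sp (n : ℕ) : Type := ℝ × EuclideanSpace ℝ (Fin n)

/-- Classical partial derivative in the time direction. -/
def pdt {n : ℕ} (f : Sp n → ℝ) (p : Sp n) : ℝ :=
  fderiv ℝ f p (1, 0)

/-- Classical partial derivative in the `i`-th space direction. -/
def pdx {n : ℕ} (i : Fin n) (f : Sp n → ℝ) (p : Sp n) : ℝ :=
  fderiv ℝ f p (0, EuclideanSpace.single i 1)

/-- The odd nonlinearity `s ↦ |s|^(q-1) s` (with the convention `|0|^(q-1)·0 = 0`). -/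
def nl (q s : ℝ) : ℝ := |s| ^ (q - 1) * s

/-- A test function: infinitely differentiable with compact support. -/
def IsTest {n : ℕ} (φ : Sp n → ℝ) : Prop :=
  ContDiff ℝ (⊤ : ℕ∞) φ ∧ HasCompactSupport φ

/-- `g` is the weak time-derivative of `u` on `ℝ × ℝⁿ`: `g` is locally integrable and
integration by parts against every test function holds. -/
def IsWeakDerivT {n : ℕ} (u g : Sp n → ℝ) : Prop :=
  LocallyIntegrable g volume ∧
  ∀ φ : Sp n → ℝ, IsTest φ → ∫ p, u p * pdt φ p = -∫ p, g p * φ p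

/-- `g` is the weak `x_i`-derivative of `u` on `ℝ × ℝⁿ`. -/
def IsWeakDerivX {n : ℕ} (i : Fin n) (u g : Sp n → ℝ) : Prop :=
  LocallyIntegrable g volume ∧
  ∀ φ : Sp n → ℝ, IsTest φ → ∫ p, u p * pdx i φ p = -∫ p, g p * φ p

/-- Standing assumptions on the coefficients `a_{ij}` and the dominating function `A`:
measurability, local boundedness, symmetry, and `0 ≤ Σ a_{ij} ξ_i ξ_j ≤ A |ξ|²` a.e. -/
structure Coeffs (n : ℕ) (a : Fin n → Fin n → Sp n → ℝ) (A : Sp n → ℝ) : Prop where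
  meas : ∀ i j, Measurable (a i j)
  locBdd : ∀ i j, ∀ K : Set (Sp n), IsCompact K → ∃ C : ℝ, ∀ p ∈ K, |a i j p| ≤ C
  symm : ∀ᵐ p : Sp n, ∀ i j, a i j p = a j i p
  measA : Measurable A
  nonnegA : ∀ p, 0 ≤ A p
  locBddA : ∀ K : Set (Sp n), IsCompact K → ∃ C : ℝ, ∀ p ∈ K, A p ≤ C
  quad : ∀ᵐ p : Sp n, ∀ ξ : Fin n → ℝ,
    0 ≤ ∑ i : Fin n, ∑ j : Fin n, a i j p * ξ i * ξ j ∧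
    ∑ i : Fin n, ∑ j : Fin n, a i j p * ξ i * ξ j ≤ A p * ∑ i : Fin n, ξ i ^ 2

/-- Condition (8): the essential supremum of `A` over the slab `{R/2 < |x| < R}`
is at most `c·R^(2-α)`, for every `R > 1`. -/
def Cond8 {n : ℕ} (A : Sp n → ℝ) (α c : ℝ) : Prop :=
  ∀ R : ℝ, 1 < R →
    ∀ᵐ p : Sp n, (R / 2 < ‖p.2‖ ∧ ‖p.2‖ < R) → A p ≤ c * R ^ (2 - α)

/-- `(u, v)` is a weak solution of
`u_t − Σ ∂_{x_i}(a_{ij} ∂_{x_j}u) − |u|^{q−1}u ≥ v_t − Σ ∂_{x_i}(a_{ij} ∂_{x_j}v) − |v|^{q−1}v`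
in the whole space `ℝ × ℝⁿ`. -/
def WeakSolPair {n : ℕ} (q : ℝ) (a : Fin n → Fin n → Sp n → ℝ) (u v : Sp n → ℝ) : Prop :=
  Measurable u ∧ Measurable v ∧
  LocallyIntegrable u volume ∧ LocallyIntegrable v volume ∧
  LocallyIntegrable (fun p => |u p| ^ q) volume ∧
  LocallyIntegrable (fun p => |v p| ^ q) volume ∧
  ∃ ut vt : Sp n → ℝ, ∃ ux vx : Fin n → Sp n → ℝ,
    IsWeakDerivT u ut ∧ IsWeakDerivT v vt ∧
    (∀ j, IsWeakDerivX j u (ux j)) ∧ (∀ j, IsWeakDerivX j v (vx j)) ∧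
    ∀ φ : Sp n → ℝ, IsTest φ → (∀ p, 0 ≤ φ p) →
      ∫ p, (vt p * φ p + ∑ i : Fin n, ∑ j : Fin n, a i j p * pdx i φ p * vx j p
              - nl q (v p) * φ p) ≤
      ∫ p, (ut p * φ p + ∑ i : Fin n, ∑ j : Fin n, a i j p * pdx i φ p * ux j p
              - nl q (u p) * φ p)

namespace SharpAux
open Real Polynomial

def g1 (y : ℝ) : ℝ := y⁻¹^2 * expNegInvGlue y
def g2 (y : ℝ) : ℝ := (y⁻¹^2*y⁻¹^2 - 2*(y⁻¹^2*y⁻¹)) * expNegInvGlue y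

lemma g_hasDeriv (y : ℝ) : HasDerivAt expNegInvGlue (g1 y) y := by
  have h := expNegInvGlue.hasDerivAt_polynomial_eval_inv_mul (1 : ℝ[X]) y
  simpa [g1] using h

lemma g1_hasDeriv (y : ℝ) : HasDerivAt g1 (g2 y) y := by
  have h := expNegInvGlue.hasDerivAt_polynomial_eval_inv_mul ((X : ℝ[X])^2) y
  have e1 : (fun x : ℝ => eval x⁻¹ ((X:ℝ[X])^2) * expNegInvGlue x) = g1 := by
    funext x; simp [g1]
  rw [e1] at h
  have e2 : eval y⁻¹ ((X:ℝ[X]) ^ 2 * (X ^ 2 - derivative (X ^ 2))) * expNegInvGlue y = g2 y := by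
    simp only [g2, derivative_pow, derivative_X, eval_mul, eval_sub, eval_pow, eval_X,
      eval_natCast, eval_one, mul_one, Nat.cast_ofNat, eval_C, eval_ofNat, pow_one]
    ring
  rwa [e2] at h

lemma g1_contDiff : ContDiff ℝ (⊤ : ℕ∞) g1 := by
  have h := expNegInvGlue.contDiff_polynomial_eval_inv_mul (n := (⊤:ℕ∞)) ((X : ℝ[X])^2)
  have e1 : (fun x : ℝ => eval x⁻¹ ((X:ℝ[X])^2) * expNegInvGlue x) = g1 := by
    funext x; simp [g1]
  rwa [e1] at h

lemma g1_nonpos {y : ℝ} (hy : y ≤ 0) : g1 y = 0 := by simp [g1, expNegInvGlue.zero_of_nonpos hy]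
lemma g2_nonpos {y : ℝ} (hy : y ≤ 0) : g2 y = 0 := by simp [g2, expNegInvGlue.zero_of_nonpos hy]

/-! ### 1D line derivatives -/

lemma lineT (κ m c t : ℝ) (hc : c ≠ 0) :
    HasDerivAt (fun s : ℝ => κ * ((1+(t+s)^2) ^ (-(m/2):ℝ) * expNegInvGlue ((t+s)/c)))
      (κ * ((-(m/2)) * (1+t^2) ^ (-(m/2)-1:ℝ) * (2*t) * expNegInvGlue (t/c)
        + (1+t^2) ^ (-(m/2):ℝ) * (g1 (t/c) * c⁻¹))) 0 := by
  have h1 : HasDerivAt (fun s : ℝ => t + s) 1 0 := by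
    simpa using (hasDerivAt_id (0:ℝ)).const_add t
  have h2 : HasDerivAt (fun s : ℝ => 1 + (t + s)^2) (2*t) 0 := by
    have := (h1.pow 2).const_add 1
    norm_num at this
    exact this.const_add 1
  have h3 : HasDerivAt (fun s : ℝ => (1 + (t + s)^2) ^ (-(m/2):ℝ))
      ((-(m/2)) * (1+t^2) ^ (-(m/2)-1:ℝ) * (2*t)) 0 := by
    have := h2.rpow_const (p := (-(m/2) : ℝ)) (Or.inl (by norm_num; positivity))
    norm_num at this
    convert this using 1
    ring
  have h4 : HasDerivAt (fun s : ℝ => (t + s) / c) c⁻¹ 0 := by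
    simpa [one_div] using h1.div_const c
  have h5 : HasDerivAt (fun s : ℝ => expNegInvGlue ((t + s) / c))
      (g1 (t/c) * c⁻¹) 0 := by
    have := (g_hasDeriv ((t + 0) / c)).comp 0 h4
    norm_num at this
    exact this
  have h6 := (h3.mul h5).const_mul κ
  norm_num at h6
  refine h6.congr_deriv ?_
  ring

lemma lineX (κ P m t γ β r a : ℝ) (hr : 0 ≤ r) (hc : (1 + γ*(1+r)^(β/2:ℝ)) ≠ 0) :
    HasDerivAt (fun s : ℝ =>
        κ * (P * expNegInvGlue (t / (1 + γ * (1 + (r + 2*a*s + s^2)) ^ (β/2:ℝ)))))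
      (κ * (P * (g1 (t / (1 + γ*(1+r)^(β/2:ℝ))) *
        (-(t*γ*β) * ((1 + γ*(1+r)^(β/2:ℝ))⁻¹^2) * ((1+r)^(β/2-1:ℝ) * a))))) 0 := by
  have h1r : (1:ℝ) + r ≠ 0 := by positivity
  have hρ : HasDerivAt (fun s : ℝ => r + 2*a*s + s^2) (2*a) 0 := by
    have := (((hasDerivAt_id (0:ℝ)).const_mul (2*a)).const_add r).add (hasDerivAt_pow 2 (0:ℝ))
    norm_num at this
    exact this
  have hb : HasDerivAt (fun s : ℝ => 1 + (r + 2*a*s + s^2)) (2*a) 0 := hρ.const_add 1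
  have hw : HasDerivAt (fun s : ℝ => (1 + (r + 2*a*s + s^2)) ^ (β/2:ℝ))
      ((β/2) * (1+r) ^ (β/2-1:ℝ) * (2*a)) 0 := by
    have := hb.rpow_const (p := (β/2 : ℝ)) (Or.inl (by norm_num; positivity))
    norm_num at this
    convert this using 1
    ring
  have hcl : HasDerivAt (fun s : ℝ => 1 + γ * (1 + (r + 2*a*s + s^2)) ^ (β/2:ℝ))
      (γ * ((β/2) * (1+r) ^ (β/2-1:ℝ) * (2*a))) 0 :=
    (hw.const_mul γ).const_add 1
  have hcl0 : (1:ℝ) + γ * (1 + (r + 2*a*(0:ℝ) + (0:ℝ)^2)) ^ (β/2:ℝ) = 1 + γ*(1+r)^(β/2:ℝ) := by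
    norm_num
  have hy : HasDerivAt
      (fun s : ℝ => t / (1 + γ * (1 + (r + 2*a*s + s^2)) ^ (β/2:ℝ)))
      ((0 * (1 + γ*(1+r)^(β/2:ℝ)) - t * (γ * ((β/2) * (1+r) ^ (β/2-1:ℝ) * (2*a))))
        / (1 + γ*(1+r)^(β/2:ℝ)) ^ 2) 0 := by
    have := (hasDerivAt_const (0:ℝ) t).div hcl (by rw [hcl0]; exact hc)
    rw [hcl0] at this
    exact this
  have hyval : t / (1 + γ * (1 + (r + 2*a*(0:ℝ) + (0:ℝ)^2)) ^ (β/2:ℝ))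
      = t / (1 + γ*(1+r)^(β/2:ℝ)) := by norm_num
  have hg' : HasDerivAt expNegInvGlue (g1 (t / (1 + γ*(1+r)^(β/2:ℝ))))
      (t / (1 + γ * (1 + (r + 2*a*(0:ℝ) + (0:ℝ)^2)) ^ (β/2:ℝ))) := by
    rw [hyval]; exact g_hasDeriv _
  have hg := hg'.comp 0 hy
  have hfull := (hg.const_mul P).const_mul κ
  refine hfull.congr_deriv ?_
  field_simp
  ring

lemma lineP (κ P t γ β r a : ℝ) (hr : 0 ≤ r) (hc : (1 + γ*(1+r)^(β/2:ℝ)) ≠ 0) :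
    HasDerivAt (fun s : ℝ =>
        (κ * (P * (g1 (t / (1 + γ*(1+(r + 2*a*s + s^2))^(β/2:ℝ))) *
          (-(t*γ*β) * ((1 + γ*(1+(r + 2*a*s + s^2))^(β/2:ℝ))⁻¹^2))))) * (a + s))
      ((κ * (P * ((t*γ*β) * (γ*β*(1+r)^(β/2-1:ℝ)) *
          (g2 (t / (1 + γ*(1+r)^(β/2:ℝ))) *
              (t * (((1 + γ*(1+r)^(β/2:ℝ))⁻¹^2) * ((1 + γ*(1+r)^(β/2:ℝ))⁻¹^2)))
            + g1 (t / (1 + γ*(1+r)^(β/2:ℝ))) *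
              (2 * ((1 + γ*(1+r)^(β/2:ℝ))⁻¹^2) * (1 + γ*(1+r)^(β/2:ℝ))⁻¹))))) * a^2
        + κ * (P * (g1 (t / (1 + γ*(1+r)^(β/2:ℝ))) *
            (-(t*γ*β) * ((1 + γ*(1+r)^(β/2:ℝ))⁻¹^2))))) 0 := by
  have h1r : (1:ℝ) + r ≠ 0 := by positivity
  have hρ : HasDerivAt (fun s : ℝ => r + 2*a*s + s^2) (2*a) 0 := by
    have := (((hasDerivAt_id (0:ℝ)).const_mul (2*a)).const_add r).add (hasDerivAt_pow 2 (0:ℝ))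
    norm_num at this
    exact this
  have hb : HasDerivAt (fun s : ℝ => 1 + (r + 2*a*s + s^2)) (2*a) 0 := hρ.const_add 1
  have hw : HasDerivAt (fun s : ℝ => (1 + (r + 2*a*s + s^2)) ^ (β/2:ℝ))
      ((β/2) * (1+r) ^ (β/2-1:ℝ) * (2*a)) 0 := by
    have := hb.rpow_const (p := (β/2 : ℝ)) (Or.inl (by norm_num; positivity))
    norm_num at this
    convert this using 1
    ring
  have hcl : HasDerivAt (fun s : ℝ => 1 + γ * (1 + (r + 2*a*s + s^2)) ^ (β/2:ℝ))
      (γ * ((β/2) * (1+r) ^ (β/2-1:ℝ) * (2*a))) 0 :=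
    (hw.const_mul γ).const_add 1
  have hcl0 : (1:ℝ) + γ * (1 + (r + 2*a*(0:ℝ) + (0:ℝ)^2)) ^ (β/2:ℝ) = 1 + γ*(1+r)^(β/2:ℝ) := by
    norm_num
  have hc0' : (1:ℝ) + γ * (1 + (r + 2*a*(0:ℝ) + (0:ℝ)^2)) ^ (β/2:ℝ) ≠ 0 := by
    rw [hcl0]; exact hc
  have hy : HasDerivAt
      (fun s : ℝ => t / (1 + γ * (1 + (r + 2*a*s + s^2)) ^ (β/2:ℝ)))
      ((0 * (1 + γ*(1+r)^(β/2:ℝ)) - t * (γ * ((β/2) * (1+r) ^ (β/2-1:ℝ) * (2*a))))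
        / (1 + γ*(1+r)^(β/2:ℝ)) ^ 2) 0 := by
    have := (hasDerivAt_const (0:ℝ) t).div hcl hc0'
    rw [hcl0] at this
    exact this
  have hyval : t / (1 + γ * (1 + (r + 2*a*(0:ℝ) + (0:ℝ)^2)) ^ (β/2:ℝ))
      = t / (1 + γ*(1+r)^(β/2:ℝ)) := by norm_num
  have hg1' : HasDerivAt g1 (g2 (t / (1 + γ*(1+r)^(β/2:ℝ))))
      (t / (1 + γ * (1 + (r + 2*a*(0:ℝ) + (0:ℝ)^2)) ^ (β/2:ℝ))) := by
    rw [hyval]; exact g1_hasDeriv _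
  have hg1c := hg1'.comp 0 hy
  have hinv : HasDerivAt (fun s : ℝ => (1 + γ * (1 + (r + 2*a*s + s^2)) ^ (β/2:ℝ))⁻¹)
      (-(γ * ((β/2) * (1+r) ^ (β/2-1:ℝ) * (2*a))) / (1 + γ*(1+r)^(β/2:ℝ)) ^ 2) 0 := by
    have := hcl.inv hc0'
    rw [hcl0] at this
    exact this
  have hinvsq := hinv.pow 2
  have hneg := hinvsq.const_mul (-(t*γ*β))
  have hprod := hg1c.mul hneg
  have houter := (hprod.const_mul P).const_mul κ
  have hlin : HasDerivAt (fun s : ℝ => a + s) 1 0 := by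
    simpa using (hasDerivAt_id (0:ℝ)).const_add a
  have hfull := houter.mul hlin
  refine hfull.congr_deriv ?_
  norm_num
  field_simp

end SharpAux

namespace SharpAux

open Real Polynomial

/-! ### space geometry -/

variable {n : ℕ}

abbrev E (n : ℕ) := EuclideanSpace ℝ (Fin n)

def rr (x : E n) : ℝ := ∑ i, x i ^ 2

lemma rr_nonneg (x : E n) : 0 ≤ rr x := Finset.sum_nonneg fun i _ => sq_nonneg _

lemma rr_eq_norm (x : E n) : rr x = ‖x‖ ^ 2 := by
  rw [EuclideanSpace.norm_eq, Real.sq_sqrt (by positivity)]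
  simp [rr, Real.norm_eq_abs, sq_abs]

lemma rr_contDiff : ContDiff ℝ (⊤ : ℕ∞) (rr (n := n)) :=
  ContDiff.sum fun i _ => ((EuclideanSpace.proj (𝕜 := ℝ) i).contDiff).pow 2

lemma rr_line (x : E n) (j : Fin n) :
    (fun s : ℝ => rr (x + s • EuclideanSpace.single j 1)) =
      fun s => rr x + 2 * x j * s + s ^ 2 := by
  funext s
  have key : ∀ i, (x + s • EuclideanSpace.single j (1:ℝ)) i
      = x i + (if i = j then s else 0) := by
    intro i
    by_cases h : i = j <;>
      simp [h, EuclideanSpace.single_apply]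
  calc (∑ i, ((x + s • EuclideanSpace.single j (1:ℝ)) i) ^ 2)
      = ∑ i, ((x i) ^ 2 + (if i = j then 2 * x j * s + s ^ 2 else 0)) := by
        refine Finset.sum_congr rfl fun i _ => ?_
        rw [key i]
        by_cases h : i = j
        · subst h; simp; ring
        · simp [h]
    _ = rr x + 2 * x j * s + s ^ 2 := by
        rw [Finset.sum_add_distrib, Finset.sum_ite_eq' Finset.univ j
          (fun _ => 2 * x j * s + s ^ 2)]
        simp [rr, add_assoc]

lemma coord_line (x : E n) (j : Fin n) (s : ℝ) :
    (x + s • EuclideanSpace.single j (1:ℝ)) j = x j + s := by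
  simp [EuclideanSpace.single_apply]

lemma coord_contDiff (j : Fin n) : ContDiff ℝ (⊤ : ℕ∞) (fun x : E n => x j) :=
  (EuclideanSpace.proj (𝕜 := ℝ) j).contDiff

/-! ### bridges (from bridge.lean, proven) -/

lemma curve_hasDerivAt {n : ℕ} (p v : Sp n) :
    HasDerivAt (fun s : ℝ => p + s • v) v 0 :=
  ((hasDerivAt_id (0:ℝ)).smul_const v).const_add p |>.congr_deriv (one_smul ℝ v)

lemma pdx_eq_line {n : ℕ} {f : Sp n → ℝ} {p : Sp n} (hf : DifferentiableAt ℝ f p)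
    {j : Fin n} {d : ℝ}
    (h : HasDerivAt (fun s : ℝ => f (p.1, p.2 + s • EuclideanSpace.single j 1)) d 0) :
    pdx j f p = d := by
  have hc := curve_hasDerivAt p ((0:ℝ), (EuclideanSpace.single j 1 : EuclideanSpace ℝ (Fin n)))
  have hcomp :
      HasDerivAt (fun s : ℝ => f (p.1, p.2 + s • EuclideanSpace.single j 1))
        (fderiv ℝ f p ((0:ℝ), EuclideanSpace.single j 1)) 0 := by
    have hf' : HasFDerivAt f (fderiv ℝ f p)
        (p + (0:ℝ) • ((0:ℝ), (EuclideanSpace.single j 1 : EuclideanSpace ℝ (Fin n)))) := by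
      simpa using hf.hasFDerivAt
    have h2 := hf'.comp_hasDerivAt (x := (0:ℝ)) hc
    have heq : (f ∘ fun s : ℝ =>
        p + s • ((0:ℝ), (EuclideanSpace.single j 1 : EuclideanSpace ℝ (Fin n)))) =
        fun s : ℝ => f (p.1, p.2 + s • EuclideanSpace.single j 1) := by
      funext s
      have : p + ((0:ℝ), s • (EuclideanSpace.single j 1 : EuclideanSpace ℝ (Fin n)))
          = (p.1, p.2 + s • EuclideanSpace.single j 1) := by
        refine Prod.ext_iff.mpr ⟨?_, ?_⟩ <;> simp
      simp [Function.comp, this]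
    rw [heq] at h2
    simpa using h2
  exact (h.unique hcomp).symm ▸ rfl

lemma pdt_eq_line {n : ℕ} {f : Sp n → ℝ} {p : Sp n} (hf : DifferentiableAt ℝ f p)
    {d : ℝ}
    (h : HasDerivAt (fun s : ℝ => f (p.1 + s, p.2)) d 0) :
    pdt f p = d := by
  have hc := curve_hasDerivAt p ((1:ℝ), (0 : EuclideanSpace ℝ (Fin n)))
  have hcomp :
      HasDerivAt (fun s : ℝ => f (p.1 + s, p.2))
        (fderiv ℝ f p ((1:ℝ), 0)) 0 := by
    have hf' : HasFDerivAt f (fderiv ℝ f p)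
        (p + (0:ℝ) • ((1:ℝ), (0 : EuclideanSpace ℝ (Fin n)))) := by
      simpa using hf.hasFDerivAt
    have h2 := hf'.comp_hasDerivAt (x := (0:ℝ)) hc
    have heq : (f ∘ fun s : ℝ => p + s • ((1:ℝ), (0 : EuclideanSpace ℝ (Fin n)))) =
        fun s : ℝ => f (p.1 + s, p.2) := by
      funext s
      have : p + (s, (0 : EuclideanSpace ℝ (Fin n))) = (p.1 + s, p.2) := by
        refine Prod.ext_iff.mpr ⟨?_, ?_⟩ <;> simp
      simp [Function.comp, this]
    rw [heq] at h2
    simpa using h2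
  exact (h.unique hcomp).symm ▸ rfl

lemma pdx_const {n : ℕ} (j : Fin n) (c : ℝ) (p : Sp n) : pdx j (fun _ => c) p = 0 := by
  simp [pdx, fderiv_const]

/-! ### the main functions -/

variable (β γ m κ : ℝ)

def ww (x : E n) : ℝ := (1 + rr x) ^ (β/2 : ℝ)
def cc (x : E n) : ℝ := 1 + γ * ww β x
def PP (t : ℝ) : ℝ := (1 + t^2) ^ (-(m/2) : ℝ)
def dPP (t : ℝ) : ℝ := (-(m/2)) * (1 + t^2) ^ (-(m/2) - 1 : ℝ) * (2*t)
def uu (p : Sp n) : ℝ := κ * (PP m p.1 * expNegInvGlue (p.1 / cc β γ p.2))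
def Afun (p : Sp n) : ℝ := (1 + rr p.2) ^ ((2-β)/2 : ℝ)
def Psi (p : Sp n) : ℝ :=
  κ * (PP m p.1 * (g1 (p.1 / cc β γ p.2) * (-(p.1 * γ * β) * ((cc β γ p.2)⁻¹^2))))
def Lam (p : Sp n) : ℝ :=
  κ * (PP m p.1 * ((p.1 * γ * β) * (γ * β * (1 + rr p.2) ^ (β/2 - 1 : ℝ)) *
    (g2 (p.1 / cc β γ p.2) * (p.1 * ((cc β γ p.2)⁻¹^2) * ((cc β γ p.2)⁻¹^2))
      + g1 (p.1 / cc β γ p.2) * (2 * ((cc β γ p.2)⁻¹^2) * (cc β γ p.2)⁻¹))))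

variable {β γ m κ}

lemma base_pos (x : E n) : 0 < 1 + rr x := by linarith [rr_nonneg x]

lemma ww_pos (x : E n) : 0 < ww β x := Real.rpow_pos_of_pos (base_pos x) _

lemma one_le_ww (hβ : 0 ≤ β) (x : E n) : 1 ≤ ww β x :=
  Real.one_le_rpow (by linarith [rr_nonneg x]) (by linarith)

lemma cc_pos (hγ : 0 < γ) (x : E n) : 0 < cc β γ x := by
  have := ww_pos (β := β) x; unfold cc; nlinarith

lemma PP_pos (t : ℝ) : 0 < PP m t := Real.rpow_pos_of_pos (by positivity) _

lemma ww_contDiff : ContDiff ℝ (⊤ : ℕ∞) (ww β (n := n)) :=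
  (contDiff_const.add rr_contDiff).rpow_const_of_ne fun x => (base_pos x).ne'

lemma cc_contDiff : ContDiff ℝ (⊤ : ℕ∞) (cc β γ (n := n)) :=
  contDiff_const.add (contDiff_const.mul ww_contDiff)

lemma PP_contDiff : ContDiff ℝ (⊤ : ℕ∞) (PP m) :=
  (contDiff_const.add (contDiff_id.pow 2)).rpow_const_of_ne fun t => by positivity

lemma yy_contDiff (hγ : 0 < γ) : ContDiff ℝ (⊤ : ℕ∞) (fun p : Sp n => p.1 / cc β γ p.2) :=
  contDiff_fst.div (cc_contDiff.comp contDiff_snd) fun p => (cc_pos hγ p.2).ne'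

lemma uu_contDiff (hγ : 0 < γ) : ContDiff ℝ (⊤ : ℕ∞) (uu β γ m κ (n := n)) :=
  contDiff_const.mul ((PP_contDiff.comp contDiff_fst).mul
    (expNegInvGlue.contDiff.comp (yy_contDiff hγ)))

lemma Afun_contDiff : ContDiff ℝ (⊤ : ℕ∞) (Afun β (n := n)) :=
  ((contDiff_const.add rr_contDiff).comp contDiff_snd).rpow_const_of_ne
    fun p => (base_pos p.2).ne'

lemma Psi_contDiff (hγ : 0 < γ) : ContDiff ℝ (⊤ : ℕ∞) (Psi β γ m κ (n := n)) := by
  refine contDiff_const.mul ((PP_contDiff.comp contDiff_fst).mul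
    ((g1_contDiff.comp (yy_contDiff hγ)).mul (ContDiff.mul ?_ ?_)))
  · exact (contDiff_fst.mul contDiff_const).mul contDiff_const |>.neg
  · exact ((cc_contDiff.comp contDiff_snd).inv fun p => (cc_pos hγ p.2).ne').pow 2


end SharpAux

namespace SharpAux
open Real

variable {n : ℕ} {β γ m κ : ℝ}

lemma topLe : (1 : WithTop ℕ∞) ≤ ((⊤ : ℕ∞) : WithTop ℕ∞) := by exact_mod_cast le_top

lemma uu_pdt (hγ : 0 < γ) (p : Sp n) :
    pdt (uu β γ m κ) p =
      κ * (dPP m p.1 * expNegInvGlue (p.1 / cc β γ p.2)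
        + PP m p.1 * (g1 (p.1 / cc β γ p.2) * (cc β γ p.2)⁻¹)) :=
  pdt_eq_line (((uu_contDiff hγ).differentiable (by simp)).differentiableAt)
    (lineT κ m (cc β γ p.2) p.1 (cc_pos hγ p.2).ne')

lemma uu_pdx (hγ : 0 < γ) (j : Fin n) (p : Sp n) :
    pdx j (uu β γ m κ) p =
      κ * (PP m p.1 * (g1 (p.1 / cc β γ p.2) *
        (-(p.1*γ*β) * ((cc β γ p.2)⁻¹^2) * ((1 + rr p.2) ^ (β/2-1:ℝ) * p.2 j)))) := by
  apply pdx_eq_line (((uu_contDiff hγ).differentiable (by simp)).differentiableAt)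
  have heq : (fun s : ℝ => uu β γ m κ (p.1, p.2 + s • EuclideanSpace.single j 1)) =
      (fun s : ℝ => κ * (PP m p.1 * expNegInvGlue (p.1 /
        (1 + γ * (1 + (rr p.2 + 2*p.2 j*s + s^2)) ^ (β/2:ℝ))))) := by
    funext s
    simp only [uu, cc, ww]
    rw [congrFun (rr_line p.2 j) s]
  rw [heq]
  exact lineX κ (PP m p.1) m p.1 γ β (rr p.2) (p.2 j) (rr_nonneg p.2) (cc_pos hγ p.2).ne'

lemma Psi_pdx (hγ : 0 < γ) (j : Fin n) (p : Sp n) :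
    pdx j (fun p' => Psi β γ m κ p' * p'.2 j) p
      = Lam β γ m κ p * p.2 j ^ 2 + Psi β γ m κ p := by
  have hdiff : DifferentiableAt ℝ (fun p' : Sp n => Psi β γ m κ p' * p'.2 j) p :=
    (((Psi_contDiff hγ).mul ((coord_contDiff j).comp contDiff_snd)).differentiable
      (by simp)).differentiableAt
  apply pdx_eq_line hdiff
  have heq : (fun s : ℝ => Psi β γ m κ (p.1, p.2 + s • EuclideanSpace.single j 1)
        * (((p.2 + s • EuclideanSpace.single j 1 : E n)) j)) =
      (fun s : ℝ => (κ * (PP m p.1 * (g1 (p.1 / (1 + γ*(1+(rr p.2 + 2*p.2 j*s + s^2))^(β/2:ℝ))) *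
          (-(p.1*γ*β) * ((1 + γ*(1+(rr p.2 + 2*p.2 j*s + s^2))^(β/2:ℝ))⁻¹^2))))) * (p.2 j + s)) := by
    funext s
    simp only [Psi, cc, ww]
    rw [congrFun (rr_line p.2 j) s, coord_line]
  rw [heq]
  refine (lineP κ (PP m p.1) p.1 γ β (rr p.2) (p.2 j) (rr_nonneg p.2)
    (cc_pos hγ p.2).ne').congr_deriv ?_
  simp only [Lam, Psi, cc, ww]
  ring

lemma Apdx (hγ : 0 < γ) (j : Fin n) (p : Sp n) :
    Afun β p * pdx j (uu β γ m κ) p = Psi β γ m κ p * p.2 j := by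
  rw [uu_pdx hγ j p]
  have hpow : (1 + rr p.2) ^ ((2-β)/2:ℝ) * (1 + rr p.2) ^ (β/2-1:ℝ) = 1 := by
    rw [← Real.rpow_add (base_pos p.2)]
    have : (2-β)/2 + (β/2-1) = 0 := by ring
    rw [this, Real.rpow_zero]
  simp only [Afun, Psi]
  linear_combination (κ * (PP m p.1 * (g1 (p.1 / cc β γ p.2) *
    (-(p.1*γ*β) * ((cc β γ p.2)⁻¹^2) * p.2 j)))) * hpow

lemma sum_terms (hγ : 0 < γ) (p : Sp n) :
    (∑ i, ∑ j, pdx i (fun p' => (if i = j then Afun β p' else 0) * pdx j (uu β γ m κ) p') p)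
      = Lam β γ m κ p * rr p.2 + n * Psi β γ m κ p := by
  have hterm : ∀ i j : Fin n,
      pdx i (fun p' => (if i = j then Afun β p' else 0) * pdx j (uu β γ m κ) p') p
        = if i = j then Lam β γ m κ p * p.2 i ^ 2 + Psi β γ m κ p else 0 := by
    intro i j
    by_cases h : i = j
    · subst h
      have heq : (fun p' : Sp n => (if i = i then Afun β p' else 0) * pdx i (uu β γ m κ) p')
          = fun p' => Psi β γ m κ p' * p'.2 i := by
        funext p'
        rw [if_pos rfl, Apdx hγ i p']
      rw [heq, Psi_pdx hγ i p, if_pos rfl]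
    · simp only [if_neg h]
      have heq : (fun p' : Sp n => (0:ℝ) * pdx j (uu β γ m κ) p') = fun _ => (0:ℝ) := by
        funext p'; ring
      rw [heq, pdx_const]
  calc (∑ i, ∑ j, pdx i (fun p' => (if i = j then Afun β p' else 0) * pdx j (uu β γ m κ) p') p)
      = ∑ i : Fin n, (Lam β γ m κ p * p.2 i ^ 2 + Psi β γ m κ p) := by
        refine Finset.sum_congr rfl fun i _ => ?_
        rw [Finset.sum_congr rfl fun j _ => hterm i j]
        simp
    _ = Lam β γ m κ p * rr p.2 + n * Psi β γ m κ p := by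
        rw [Finset.sum_add_distrib, ← Finset.mul_sum, Finset.sum_const, Finset.card_univ]
        simp [rr, nsmul_eq_mul]

end SharpAux

namespace SharpAux
open Real

variable {n : ℕ} {β γ m κ q : ℝ}

lemma expNegInvGlue_le_one (y : ℝ) : expNegInvGlue y ≤ 1 := by
  rcases le_or_gt y 0 with h | h
  · rw [expNegInvGlue.zero_of_nonpos h]; norm_num
  · have : expNegInvGlue y = Real.exp (-y⁻¹) := by
      simp [expNegInvGlue, not_le.2 h]
    rw [this]
    exact Real.exp_le_one_iff.mpr (neg_nonpos.mpr (by positivity))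

lemma uu_nonneg (hκ : 0 ≤ κ) (p : Sp n) : 0 ≤ uu β γ m κ p := by
  have h1 := PP_pos (m := m) p.1
  have h2 := expNegInvGlue.nonneg (p.1 / cc β γ p.2)
  unfold uu
  positivity

set_option maxHeartbeats 2000000 in
/-- The key pointwise differential inequality. -/
lemma key (hq1 : 1 < q) (hm : m = 1/(q-1)) (hβ : 0 < β) (hγ : 0 < γ)
    (hγβ2 : γ * β^2 = 1) (hκ : 0 < κ)
    (hδpos : 0 < γ*β*(n:ℝ) - m) (hκq : κ ^ (q-1:ℝ) = γ*β*(n:ℝ) - m) (p : Sp n) :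
    Lam β γ m κ p * rr p.2 + (n:ℝ) * Psi β γ m κ p + nl q (uu β γ m κ p)
      ≤ κ * (dPP m p.1 * expNegInvGlue (p.1 / cc β γ p.2)
        + PP m p.1 * (g1 (p.1 / cc β γ p.2) * (cc β γ p.2)⁻¹)) := by
  have hc : 0 < cc β γ p.2 := cc_pos hγ p.2
  have hq0 : 0 < q - 1 := by linarith
  have hmpos : 0 < m := by rw [hm]; positivity
  rcases le_or_gt p.1 0 with ht | ht
  · -- t ≤ 0 : everything vanishes
    have hy : p.1 / cc β γ p.2 ≤ 0 := div_nonpos_iff.mpr (Or.inr ⟨ht, hc.le⟩)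
    have h0 : expNegInvGlue (p.1 / cc β γ p.2) = 0 := expNegInvGlue.zero_of_nonpos hy
    have h1 : g1 (p.1 / cc β γ p.2) = 0 := g1_nonpos hy
    have h2 : g2 (p.1 / cc β γ p.2) = 0 := g2_nonpos hy
    have hu : uu β γ m κ p = 0 := by simp [uu, h0]
    simp [Lam, Psi, nl, hu, h0, h1, h2]
  · -- t > 0
    set t := p.1 with htdef
    set r := rr p.2 with hrdef
    set c := cc β γ p.2 with hcdef
    have hr : 0 ≤ r := rr_nonneg p.2
    have ht0 : t ≠ 0 := ht.ne'
    have hc0 : c ≠ 0 := hc.ne'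
    have hbase : (0:ℝ) < 1 + r := by linarith
    have h1t : (0:ℝ) < 1 + t^2 := by positivity
    have hy : 0 < t / c := div_pos ht hc
    set G := expNegInvGlue (t / c) with hGdef
    have hGpos : 0 < G := expNegInvGlue.pos_of_pos hy
    have hGle : G ≤ 1 := expNegInvGlue_le_one _
    set P := PP m t with hPdef
    have hPpos : 0 < P := PP_pos t
    set U := κ * (P * G) with hUdef
    have hUpos : 0 < U := by positivity
    have hUeq : uu β γ m κ p = U := rfl
    set w := ww β p.2 with hwdef
    have hwpos : 0 < w := ww_pos p.2
    have hceq : c = 1 + γ * w := rfl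
    -- structural identities
    have hg1v : g1 (t/c) = (t/c)⁻¹^2 * G := rfl
    have hg2v : g2 (t/c) = ((t/c)⁻¹^2*(t/c)⁻¹^2 - 2*((t/c)⁻¹^2*(t/c)⁻¹)) * G := rfl
    have hinv : (t/c)⁻¹ = c/t := by rw [inv_div]
    have hPsi : (n:ℝ) * Psi β γ m κ p = (-(γ*β*(n:ℝ))/t) * U := by
      show (n:ℝ) * (κ * (P * (g1 (t / c) * (-(t*γ*β) * (c⁻¹^2))))) = _
      rw [hg1v, hinv, hUdef]
      field_simp
    have hLam : Lam β γ m κ p * r =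
        (γ*γ*β*β*((1+r)^(β/2-1:ℝ)*r)/t^2) * U := by
      show (κ * (P * ((t*γ*β) * (γ*β*(1+r)^(β/2-1:ℝ)) *
        (g2 (t/c) * (t * (c⁻¹^2) * (c⁻¹^2)) + g1 (t/c) * (2 * (c⁻¹^2) * c⁻¹))))) * r = _
      rw [hg1v, hg2v, hinv, hUdef]
      field_simp
      ring
    have hRHS : κ * (dPP m t * G + P * (g1 (t/c) * c⁻¹))
        = (-(m*t/(1+t^2)) + c/t^2) * U := by
      have hPP1 : (1+t^2:ℝ) ^ (-(m/2)-1:ℝ) = P * (1+t^2)⁻¹ := by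
        rw [show (-(m/2)-1:ℝ) = -(m/2) + (-1) by ring, Real.rpow_add h1t,
          Real.rpow_neg_one, hPdef]
        rfl
      show κ * ((-(m/2)) * (1+t^2) ^ (-(m/2)-1:ℝ) * (2*t) * G + P * (g1 (t/c) * c⁻¹)) = _
      rw [hPP1, hg1v, hinv, hUdef]
      field_simp
    have hnl : nl q (uu β γ m κ p) ≤ ((γ*β*(n:ℝ) - m)/t) * U := by
      rw [hUeq]
      unfold nl
      rw [abs_of_nonneg hUpos.le]
      have hUq : U ^ (q-1:ℝ) = κ^(q-1:ℝ) * (P^(q-1:ℝ) * G^(q-1:ℝ)) := by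
        rw [hUdef, Real.mul_rpow hκ.le (by positivity), Real.mul_rpow hPpos.le hGpos.le]
      have hG1 : G^(q-1:ℝ) ≤ 1 := Real.rpow_le_one hGpos.le hGle (by linarith)
      have hP1 : P^(q-1:ℝ) ≤ 1/t := by
        have e1 : P^(q-1:ℝ) = (1+t^2) ^ ((-(m/2))*(q-1) : ℝ) := by
          rw [hPdef]
          show ((1+t^2) ^ (-(m/2):ℝ)) ^ (q-1:ℝ) = _
          rw [← Real.rpow_mul h1t.le]
        have e2 : ((-(m/2))*(q-1) : ℝ) = -(1/(2:ℝ)) := by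
          rw [hm]; field_simp
        have e3 : (1+t^2:ℝ) ^ (-(1/(2:ℝ))) ≤ 1/t := by
          rw [Real.rpow_neg h1t.le, ← Real.sqrt_eq_rpow, one_div]
          exact inv_anti₀ ht (by
            calc t = Real.sqrt (t^2) := (Real.sqrt_sq ht.le).symm
            _ ≤ Real.sqrt (1+t^2) := Real.sqrt_le_sqrt (by linarith))
        rw [e1, e2]
        exact e3
      have hb : U ^ (q-1:ℝ) ≤ (γ*β*(n:ℝ) - m)/t := by
        rw [hUq, hκq]
        calc (γ*β*(n:ℝ) - m) * (P^(q-1:ℝ) * G^(q-1:ℝ))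
            ≤ (γ*β*(n:ℝ) - m) * ((1/t) * 1) := by
              apply mul_le_mul_of_nonneg_left _ hδpos.le
              exact mul_le_mul hP1 hG1 (Real.rpow_nonneg hGpos.le _) (by positivity)
          _ = (γ*β*(n:ℝ) - m)/t := by ring
      calc U ^ (q-1:ℝ) * U ≤ ((γ*β*(n:ℝ) - m)/t) * U :=
            mul_le_mul_of_nonneg_right hb hUpos.le
        _ = ((γ*β*(n:ℝ) - m)/t) * U := rfl
    -- scalar inequality
    have hwval : w = (1+r) ^ (β/2:ℝ) := rfl
    have hww : (1+r) ^ (β/2-1:ℝ) * r ≤ w := by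
      have h1 : (1+r) ^ (β/2-1:ℝ) * r ≤ (1+r) ^ (β/2-1:ℝ) * (1+r) :=
        mul_le_mul_of_nonneg_left (by linarith) (Real.rpow_nonneg hbase.le _)
      have h2 : (1+r) ^ (β/2-1:ℝ) * (1+r) = (1+r) ^ (β/2:ℝ) := by
        rw [← Real.rpow_add_one hbase.ne']
        congr 1
        ring
      rw [hwval]
      linarith
    have hscal : γ*γ*β*β*((1+r)^(β/2-1:ℝ)*r)/t^2 + (-(γ*β*(n:ℝ))/t) + (γ*β*(n:ℝ) - m)/t
        ≤ -(m*t/(1+t^2)) + c/t^2 := by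
      have h3 : m*t/(1+t^2) ≤ m/t := by
        rw [div_le_div_iff₀ h1t ht]
        calc m*t*t = m*(t*t) := by ring
          _ ≤ m*(1+t^2) := mul_le_mul_of_nonneg_left (by nlinarith) hmpos.le
      have h4 : γ*γ*β*β*((1+r)^(β/2-1:ℝ)*r) ≤ γ*w := by
        calc γ*γ*β*β*((1+r)^(β/2-1:ℝ)*r) = γ*(γ*β^2)*((1+r)^(β/2-1:ℝ)*r) := by ring
          _ = γ*((1+r)^(β/2-1:ℝ)*r) := by rw [hγβ2]; ring
          _ ≤ γ*w := mul_le_mul_of_nonneg_left hww hγ.le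
      have h6 : γ*γ*β*β*((1+r)^(β/2-1:ℝ)*r)/t^2 ≤ γ*w/t^2 :=
        (div_le_div_iff_of_pos_right (by positivity)).mpr h4
      have h5 : c/t^2 = 1/t^2 + γ*w/t^2 := by rw [hceq]; ring
      have h8 : (-(γ*β*(n:ℝ))/t) + (γ*β*(n:ℝ) - m)/t = -(m/t) := by ring
      have h7 : (0:ℝ) < 1/t^2 := by positivity
      linarith
    calc Lam β γ m κ p * r + (n:ℝ) * Psi β γ m κ p + nl q (uu β γ m κ p)
        ≤ (γ*γ*β*β*((1+r)^(β/2-1:ℝ)*r)/t^2) * U + (-(γ*β*(n:ℝ))/t) * U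
            + ((γ*β*(n:ℝ) - m)/t) * U := by
          rw [hLam, hPsi]
          exact add_le_add_right hnl _
      _ = (γ*γ*β*β*((1+r)^(β/2-1:ℝ)*r)/t^2 + (-(γ*β*(n:ℝ))/t) + (γ*β*(n:ℝ) - m)/t) * U := by
          ring
      _ ≤ (-(m*t/(1+t^2)) + c/t^2) * U := mul_le_mul_of_nonneg_right hscal hUpos.le
      _ = κ * (dPP m t * G + P * (g1 (t/c) * c⁻¹)) := hRHS.symm

end SharpAux

namespace SharpAux

def acoef (n : ℕ) (β : ℝ) : Fin n → Fin n → Sp n → ℝ :=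
  fun i j p => if i = j then Afun β p else 0

variable {n : ℕ} {β γ : ℝ}

lemma Afun_pos (p : Sp n) : 0 < Afun β p := Real.rpow_pos_of_pos (base_pos p.2) _

lemma acoef_coeffs (hβ : 0 < β) : Coeffs n (acoef n β) (Afun β) := by
  have hcont : Continuous (Afun β (n := n)) := Afun_contDiff.continuous
  refine ⟨?_, ?_, ?_, ?_, ?_, ?_, ?_⟩
  · intro i j
    unfold acoef
    by_cases h : i = j <;> simp only [h, if_true, if_false]
    · exact hcont.measurable
    · simp [h]
  · intro i j K hK
    obtain ⟨C, hC⟩ := hK.exists_bound_of_continuousOn hcont.continuousOn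
    refine ⟨max C 0, fun p hp => ?_⟩
    unfold acoef
    by_cases h : i = j <;> simp only [h, if_true, if_false]
    · exact le_trans (by simpa [Real.norm_eq_abs] using hC p hp) (le_max_left _ _)
    · simp [h, le_max_right C 0]
  · refine Filter.Eventually.of_forall fun p i j => ?_
    unfold acoef
    by_cases h : i = j
    · simp [h]
    · have h' : j ≠ i := fun hh => h hh.symm
      simp [h, h']
  · exact hcont.measurable
  · exact fun p => (Afun_pos p).le
  · intro K hK
    obtain ⟨C, hC⟩ := hK.exists_bound_of_continuousOn hcont.continuousOn
    exact ⟨C, fun p hp => le_trans (le_abs_self _) (by simpa [Real.norm_eq_abs] using hC p hp)⟩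
  · refine Filter.Eventually.of_forall fun p ξ => ?_
    have hEq : (∑ i : Fin n, ∑ j : Fin n, acoef n β i j p * ξ i * ξ j)
        = Afun β p * ∑ i : Fin n, ξ i ^ 2 := by
      have hterm : ∀ i j : Fin n, acoef n β i j p * ξ i * ξ j
          = if i = j then Afun β p * ξ i * ξ j else 0 := by
        intro i j
        unfold acoef
        by_cases h : i = j <;> simp [h]
      calc (∑ i : Fin n, ∑ j : Fin n, acoef n β i j p * ξ i * ξ j)
          = ∑ i : Fin n, (Afun β p * ξ i * ξ i) := by
            refine Finset.sum_congr rfl fun i _ => ?_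
            rw [Finset.sum_congr rfl fun j _ => hterm i j]
            simp
        _ = Afun β p * ∑ i : Fin n, ξ i ^ 2 := by
            rw [Finset.mul_sum]
            exact Finset.sum_congr rfl fun i _ => by ring
    constructor
    · rw [hEq]
      exact mul_nonneg (Afun_pos p).le (Finset.sum_nonneg fun i _ => sq_nonneg _)
    · rw [hEq]
  
lemma acoef_cond8 (hβ : 0 < β) (α : ℝ) (hαβ : α ≤ β) :
    Cond8 (Afun β (n := n)) α ((2:ℝ) ^ ((2-β)/2 : ℝ) + (2:ℝ) ^ (β-2 : ℝ)) := by
  intro R hR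
  refine Filter.Eventually.of_forall fun p hp => ?_
  obtain ⟨h1, h2⟩ := hp
  have hR0 : 0 < R := by linarith
  have hx0 : 0 ≤ ‖p.2‖ := norm_nonneg _
  have hsl : 1 + rr p.2 < 2*R^2 := by
    rw [rr_eq_norm]
    nlinarith
  have hsg : R^2/4 < 1 + rr p.2 := by
    rw [rr_eq_norm]
    nlinarith
  have hs0 : (0:ℝ) < 1 + rr p.2 := base_pos p.2
  have hRβα : R ^ (2-β:ℝ) ≤ R ^ (2-α:ℝ) :=
    Real.rpow_le_rpow_of_exponent_le hR.le (by linarith)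
  have hRpow : (0:ℝ) ≤ R ^ (2-α:ℝ) := (Real.rpow_pos_of_pos hR0 _).le
  rcases le_or_gt β 2 with hβ2 | hβ2
  · have step1 : Afun β p ≤ (2*R^2) ^ ((2-β)/2 : ℝ) :=
      Real.rpow_le_rpow hs0.le hsl.le (by linarith)
    have step2 : ((2:ℝ)*R^2) ^ ((2-β)/2 : ℝ)
        = (2:ℝ) ^ ((2-β)/2 : ℝ) * R ^ (2-β:ℝ) := by
      rw [Real.mul_rpow (by norm_num) (by positivity)]
      congr 1
      rw [← Real.rpow_natCast R 2, ← Real.rpow_mul hR0.le]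
      congr 1
      push_cast
      ring
    calc Afun β p ≤ (2:ℝ) ^ ((2-β)/2 : ℝ) * R ^ (2-β:ℝ) := by rw [← step2]; exact step1
      _ ≤ (2:ℝ) ^ ((2-β)/2 : ℝ) * R ^ (2-α:ℝ) :=
          mul_le_mul_of_nonneg_left hRβα (by positivity)
      _ ≤ ((2:ℝ) ^ ((2-β)/2 : ℝ) + (2:ℝ) ^ (β-2 : ℝ)) * R ^ (2-α:ℝ) := by
          have : (0:ℝ) < (2:ℝ) ^ (β-2 : ℝ) := by positivity
          nlinarith
  · have step1 : Afun β p ≤ (R^2/4) ^ ((2-β)/2 : ℝ) :=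
      Real.rpow_le_rpow_of_nonpos (by positivity) hsg.le (by linarith)
    have step2 : ((R:ℝ)^2/4) ^ ((2-β)/2 : ℝ) = (2:ℝ) ^ (β-2:ℝ) * R ^ (2-β:ℝ) := by
      have h4 : (R^2/4 : ℝ) = (R/2)^2 := by ring
      rw [h4, ← Real.rpow_natCast (R/2) 2, ← Real.rpow_mul (by positivity)]
      have he : ((2:ℕ):ℝ) * ((2-β)/2) = (2-β:ℝ) := by push_cast; ring
      rw [he, Real.div_rpow hR0.le (by norm_num), div_eq_mul_inv,
        ← Real.rpow_neg (by norm_num : (0:ℝ) ≤ 2)]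
      have : (-(2-β):ℝ) = β - 2 := by ring
      rw [this]
      ring
    calc Afun β p ≤ (2:ℝ) ^ (β-2:ℝ) * R ^ (2-β:ℝ) := by rw [← step2]; exact step1
      _ ≤ (2:ℝ) ^ (β-2:ℝ) * R ^ (2-α:ℝ) := mul_le_mul_of_nonneg_left hRβα (by positivity)
      _ ≤ ((2:ℝ) ^ ((2-β)/2 : ℝ) + (2:ℝ) ^ (β-2 : ℝ)) * R ^ (2-α:ℝ) := by
          have : (0:ℝ) < (2:ℝ) ^ ((2-β)/2 : ℝ) := by positivity
          nlinarith

end SharpAux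

open SharpAux in
/-- **Combined sharpness statement**: for any `α ∈ ℝ` and any `q` with `q > 1` and
`q > 1 + α/n` there is an operator with coefficients satisfying the standing assumptions
and condition (8) with exponent `α`, and a nontrivial nonnegative `C^∞` classical solution
of `u_t ≥ Σ ∂_{x_i}(a_{ij} ∂_{x_j}u) + |u|^{q−1}u` in the whole space. -/
theorem combined_sharpness (n : ℕ) (hn : 1 ≤ n) (α q : ℝ)
    (hq1 : 1 < q) (hq2 : 1 + α / n < q) :
    ∃ a : Fin n → Fin n → Sp n → ℝ, ∃ A : Sp n → ℝ,
      Coeffs n a A ∧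
      (∃ c : ℝ, 0 < c ∧ Cond8 A α c) ∧
      ∃ u : Sp n → ℝ,
        ContDiff ℝ (⊤ : ℕ∞) u ∧
        (∀ p, 0 ≤ u p) ∧
        u ≠ 0 ∧
        ∀ p : Sp n,
          (∑ i : Fin n, ∑ j : Fin n, pdx i (fun p' => a i j p' * pdx j u p') p) + nl q (u p) ≤
            pdt u p := by
  have hq0 : 0 < q - 1 := by linarith
  have hn1 : (1:ℝ) ≤ (n:ℝ) := by exact_mod_cast hn
  have hn0 : (0:ℝ) < (n:ℝ) := by linarith
  set m : ℝ := 1/(q-1) with hm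
  set β : ℝ := max α ((n:ℝ)*(q-1)/2) with hβdef
  have hβ : 0 < β := lt_of_lt_of_le (by positivity) (le_max_right _ _)
  set γ : ℝ := (β^2)⁻¹ with hγdef
  have hγ : 0 < γ := by positivity
  have hαβ : α ≤ β := le_max_left _ _
  have hαlt : α < (n:ℝ)*(q-1) := by
    have h1 : α / n < q - 1 := by linarith
    calc α = (α/(n:ℝ))*(n:ℝ) := by field_simp
      _ < (q-1)*(n:ℝ) := mul_lt_mul_of_pos_right h1 hn0
      _ = (n:ℝ)*(q-1) := by ring
  have hβlt : β < (n:ℝ)*(q-1) := by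
    have h2 : (0:ℝ) < (n:ℝ)*(q-1) := by positivity
    exact max_lt hαlt (by linarith)
  have hγβ2 : γ * β^2 = 1 := inv_mul_cancel₀ (by positivity)
  have hγβ : γ * β = β⁻¹ := by
    rw [hγdef, pow_two, mul_inv, mul_assoc, inv_mul_cancel₀ hβ.ne', mul_one]
  have hδpos : 0 < γ*β*(n:ℝ) - m := by
    have h3 : γ*β*(n:ℝ) = (n:ℝ)/β := by rw [hγβ]; ring
    have h2 : 1/(q-1) < (n:ℝ)/β := by
      rw [div_lt_div_iff₀ hq0 hβ]
      linarith
    rw [h3, hm]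
    linarith
  set κ : ℝ := (γ*β*(n:ℝ) - m) ^ (m:ℝ) with hκdef
  have hκ : 0 < κ := Real.rpow_pos_of_pos hδpos _
  have hm1 : m*(q-1) = 1 := by rw [hm]; field_simp
  have hκq : κ ^ (q-1:ℝ) = γ*β*(n:ℝ) - m := by
    rw [hκdef, ← Real.rpow_mul hδpos.le, hm1, Real.rpow_one]
  refine ⟨acoef n β, Afun β, acoef_coeffs hβ,
    ⟨(2:ℝ) ^ ((2-β)/2 : ℝ) + (2:ℝ) ^ (β-2 : ℝ), by positivity, acoef_cond8 hβ α hαβ⟩,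
    uu β γ m κ, uu_contDiff hγ, uu_nonneg hκ.le, ?_, ?_⟩
  · -- u ≠ 0
    intro h0
    have h1 : uu β γ m κ ((1:ℝ), (0 : SharpAux.E n)) = 0 := by rw [h0]; rfl
    have hy : 0 < (1:ℝ) / cc β γ (0 : SharpAux.E n) := div_pos one_pos (cc_pos hγ _)
    have h2 : 0 < uu β γ m κ ((1:ℝ), (0 : SharpAux.E n)) := by
      have e1 := expNegInvGlue.pos_of_pos hy
      have e2 := PP_pos (m := m) (1:ℝ)
      show 0 < κ * (PP m 1 * expNegInvGlue ((1:ℝ) / cc β γ (0 : SharpAux.E n)))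
      positivity
    linarith
  · -- the differential inequality
    intro p
    have hsum := sum_terms (β := β) (γ := γ) (m := m) (κ := κ) hγ p
    have hpdt := uu_pdt (β := β) (γ := γ) (m := m) (κ := κ) hγ p
    have hkey := key (n := n) hq1 hm hβ hγ hγβ2 hκ hδpos hκq p
    simp only [acoef]
    rw [hsum, hpdt]
    exact hkey
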